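/- If Q ⊆ ℝ^n is a polytope that is the solution set of at most 5 linear inequalities (i.e., Q has at most 5 facets), then any affine image of Q has at most 6 vertices (extreme points). -/

import Mathlib

open Module Set

/-- Bound on number of extreme points: `d` = dimension, `k` = number of constraints. -/
def Gbd : ℕ → ℕ → ℕ
  | _, 0 => 1
  | _, 1 => 2
  | k, (d+2) => max (Gbd k (d+1)) ((k * Gbd (k-1) (d+1)) / (d+2))

lemma Gbd_mono (k d : ℕ) : Gbd k d ≤ Gbd k (d+1) := by
  match d with
  | 0 => simp [Gbd]
  | 1 => simp [Gbd]
  | (e+2) => exact le_max_left _ _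

lemma Gbd_le : ∀ d, Gbd 0 d ≤ 2 ∧ Gbd 1 d ≤ 2 ∧ Gbd 2 d ≤ 2 ∧ Gbd 3 d ≤ 3 ∧
    Gbd 4 d ≤ 4 ∧ Gbd 5 d ≤ 6 := by
  intro d
  induction d with
  | zero => decide
  | succ d ih =>
    match d, ih with
    | 0, _ => decide
    | 1, _ => decide
    | (e+2), ih =>
      obtain ⟨h0, h1, h2, h3, h4, h5⟩ := ih
      have key : ∀ k c g : ℕ, Gbd k (e+2) ≤ c → Gbd (k-1) (e+2) ≤ g →
          k * g / 3 ≤ c → Gbd k (e+3) ≤ c := by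
        intro k c g hkc hg hdiv
        show max (Gbd k (e+2)) ((k * Gbd (k-1) (e+2)) / (e+3)) ≤ c
        refine max_le hkc ?_
        calc (k * Gbd (k-1) (e+2)) / (e+3) ≤ (k * g) / (e+3) :=
              Nat.div_le_div_right (Nat.mul_le_mul_left _ hg)
          _ ≤ (k * g) / 3 := Nat.div_le_div_left (by omega) (by omega)
          _ ≤ c := hdiv
      refine ⟨?_, ?_, ?_, ?_, ?_, ?_⟩
      · exact key 0 2 2 h0 (by simpa using h0) (by omega)
      · exact key 1 2 2 h1 (by simpa using h0) (by omega)
      · exact key 2 2 2 h2 (by simpa using h1) (by omega)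
      · exact key 3 3 2 h3 (by simpa using h2) (by omega)
      · exact key 4 4 3 h4 (by simpa using h3) (by omega)
      · exact key 5 6 4 h5 (by simpa using h4) (by omega)

/-- Intersecting with the kernel of a functional drops finrank by at most 1. -/
lemma finrank_inf_ker_ge {V : Type*} [AddCommGroup V] [Module ℝ V] [FiniteDimensional ℝ V]
    (W : Submodule ℝ V) (f : V →ₗ[ℝ] ℝ) :
    finrank ℝ W ≤ 1 + finrank ℝ ↥(W ⊓ LinearMap.ker f) := by
  have h := LinearMap.finrank_range_add_finrank_ker (f.comp W.subtype)
  have hker : LinearMap.ker (f.comp W.subtype) = Submodule.comap W.subtype (LinearMap.ker f) :=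
    LinearMap.ker_comp _ _
  have h2 : finrank ℝ ↥(LinearMap.ker (f.comp W.subtype)) = finrank ℝ ↥(W ⊓ LinearMap.ker f) := by
    rw [hker, ← Submodule.finrank_map_subtype_eq W, Submodule.map_comap_subtype]
  have h3 : finrank ℝ ↥(LinearMap.range (f.comp W.subtype)) ≤ 1 := by
    simpa using (LinearMap.range (f.comp W.subtype)).finrank_le
  omega

lemma finrank_le_card_add {V : Type*} [AddCommGroup V] [Module ℝ V] [FiniteDimensional ℝ V]
    (a : Fin 5 → (V →ₗ[ℝ] ℝ)) (t : Finset (Fin 5)) (W : Submodule ℝ V) :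
    finrank ℝ W ≤ t.card + finrank ℝ ↥(W ⊓ ⨅ i ∈ t, LinearMap.ker (a i)) := by
  induction t using Finset.induction with
  | empty =>
    rw [show ((⨅ i ∈ (∅ : Finset (Fin 5)), LinearMap.ker (a i)) : Submodule ℝ V) = ⊤ by simp, inf_top_eq]
    simp
  | @insert i t hi ih =>
    have : W ⊓ ⨅ j ∈ insert i t, LinearMap.ker (a j)
        = (W ⊓ ⨅ j ∈ t, LinearMap.ker (a j)) ⊓ LinearMap.ker (a i) := by
      rw [Finset.iInf_insert]
      rw [inf_assoc, inf_comm (LinearMap.ker (a i))]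
    rw [this, Finset.card_insert_of_notMem hi]
    have := finrank_inf_ker_ge (W ⊓ ⨅ j ∈ t, LinearMap.ker (a j)) (a i)
    omega

/-- No three pairwise distinct elements implies small. -/
lemma ncard_le_two_of {α : Type*} (E : Set α)
    (h : ∀ x ∈ E, ∀ y ∈ E, ∀ z ∈ E, x = y ∨ y = z ∨ x = z) :
    E.Finite ∧ E.ncard ≤ 2 := by
  by_cases hE : ∃ x ∈ E, ∃ y ∈ E, x ≠ y
  · obtain ⟨x, hx, y, hy, hxy⟩ := hE
    have hsub : E ⊆ {x, y} := by
      intro z hz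
      rcases h x hx z hz y hy with h1 | h1 | h1
      · exact Or.inl h1.symm
      · exact Or.inr h1
      · exact absurd h1 hxy
    have hfin : E.Finite := ((Set.finite_singleton y).insert x).subset hsub
    refine ⟨hfin, ?_⟩
    calc E.ncard ≤ ({x, y} : Set α).ncard :=
          Set.ncard_le_ncard hsub ((Set.finite_singleton y).insert x)
      _ ≤ 2 := by rw [Set.ncard_pair hxy]
  · push_neg at hE
    rcases Set.eq_empty_or_nonempty E with rfl | ⟨x, hx⟩
    · simp
    · have hsub : E ⊆ {x} := fun z hz => (hE x hx z hz).symm ▸ rfl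
      have hsub' : E ⊆ {x} := fun z hz => by
        have := hE x hx z hz; simp [this.symm]
      have hfin : E.Finite := (Set.finite_singleton x).subset hsub'
      exact ⟨hfin, le_trans (Set.ncard_le_ncard hsub' (Set.finite_singleton x)) (by simp)⟩

lemma line_case {n : ℕ} (p : Fin n → ℝ) (W : Submodule ℝ (Fin n → ℝ))
    (hW : finrank ℝ W ≤ 1) (Q : Set (Fin n → ℝ)) (hQsub : ∀ x ∈ Q, x - p ∈ W) :
    (Set.extremePoints ℝ Q).Finite ∧ (Set.extremePoints ℝ Q).ncard ≤ 2 := by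
  have hcol : Collinear ℝ Q := by
    rw [collinear_iff_rank_le_one]
    have hspan : vectorSpan ℝ Q ≤ W := by
      rw [vectorSpan, Submodule.span_le]
      rintro u ⟨x, hx, y, hy, rfl⟩
      show x -ᵥ y ∈ W
      have : x -ᵥ y = (x - p) - (y - p) := by rw [vsub_eq_sub]; abel
      rw [this]
      exact W.sub_mem (hQsub x hx) (hQsub y hy)
    calc Module.rank ℝ (vectorSpan ℝ Q) ≤ Module.rank ℝ W := Submodule.rank_mono hspan
      _ = (finrank ℝ W : Cardinal) := (Module.finrank_eq_rank ℝ W).symm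
      _ ≤ 1 := by exact_mod_cast hW
  apply ncard_le_two_of
  intro x hx y hy z hz
  have hxQ := hx.1; have hyQ := hy.1; have hzQ := hz.1
  have hcol3 : Collinear ℝ ({x, y, z} : Set (Fin n → ℝ)) :=
    hcol.subset (by intro u hu; rcases hu with rfl | rfl | rfl <;> assumption)
  rcases hcol3.wbtw_or_wbtw_or_wbtw with hw | hw | hw
  · rcases (mem_extremePoints_iff_forall_segment.mp hy).2 x hxQ z hzQ hw.mem_segment with h | h
    · exact Or.inl h
    · exact Or.inr (Or.inl h.symm)
  · rcases (mem_extremePoints_iff_forall_segment.mp hz).2 y hyQ x hxQ hw.mem_segment with h | h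
    · exact Or.inr (Or.inl h)
    · exact Or.inr (Or.inr h)
  · rcases (mem_extremePoints_iff_forall_segment.mp hx).2 z hzQ y hyQ hw.mem_segment with h | h
    · exact Or.inr (Or.inr h.symm)
    · exact Or.inl h.symm

/-- If `v` is an extreme point of `Q` and `w ∈ W` is annihilated by all constraints tight
at `v`, then `w = 0`. -/
lemma tight_ker {n : ℕ} (a : Fin 5 → ((Fin n → ℝ) →ₗ[ℝ] ℝ)) (b : Fin 5 → ℝ)
    (s : Finset (Fin 5)) (p : Fin n → ℝ) (W : Submodule ℝ (Fin n → ℝ))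
    (Q : Set (Fin n → ℝ)) (hQ : Q = {x | x - p ∈ W ∧ ∀ i ∈ s, a i x ≤ b i})
    {v : Fin n → ℝ} (hv : v ∈ Set.extremePoints ℝ Q)
    {w : Fin n → ℝ} (hw : w ∈ W) (hwk : ∀ i ∈ s, a i v = b i → a i w = 0) :
    w = 0 := by
  by_contra hw0
  have hvQ : v ∈ Q := hv.1
  have hvW : v - p ∈ W := by rw [hQ] at hvQ; exact hvQ.1
  have hvle : ∀ i ∈ s, a i v ≤ b i := by rw [hQ] at hvQ; exact hvQ.2
  set ε : ℝ := Finset.univ.inf' Finset.univ_nonempty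
    (fun i : Fin 5 => if a i w = 0 ∨ i ∉ s then 1 else (b i - a i v) / (|a i w| + 1)) with hε
  have hεpos : 0 < ε := by
    rw [hε, Finset.lt_inf'_iff]
    intro i _
    by_cases hc : a i w = 0 ∨ i ∉ s
    · simp [hc]
    · push_neg at hc
      rw [if_neg (by push_neg; exact hc)]
      have hne : a i v ≠ b i := fun h => hc.1 (hwk i hc.2 h)
      have := hvle i hc.2
      have hbpos : 0 < b i - a i v := by cases lt_or_eq_of_le this with
        | inl h => linarith
        | inr h => exact absurd h hne
      positivity
  have hmem : ∀ t : ℝ, |t| ≤ ε → v + t • w ∈ Q := by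
    intro t ht
    rw [hQ]
    constructor
    · have : v + t • w - p = (v - p) + t • w := by abel
      rw [this]
      exact W.add_mem hvW (W.smul_mem t hw)
    · intro i hi
      have hai : a i (v + t • w) = a i v + t * a i w := by
        rw [map_add, map_smul]; rfl
      rw [hai]
      by_cases hz : a i w = 0
      · rw [hz]; simpa using hvle i hi
      · have hinf : ε ≤ (b i - a i v) / (|a i w| + 1) := by
          have := Finset.inf'_le (b := i)
            (fun i : Fin 5 => if a i w = 0 ∨ i ∉ s then 1 else (b i - a i v) / (|a i w| + 1))
            (Finset.mem_univ i)
          rwa [if_neg (by push_neg; exact ⟨hz, hi⟩)] at this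
        have habs : 0 < |a i w| + 1 := by positivity
        have h1 : ε * (|a i w| + 1) ≤ b i - a i v := by
          rw [← le_div_iff₀ habs]; exact hinf
        have h2 : t * a i w ≤ |t| * |a i w| := by
          calc t * a i w ≤ |t * a i w| := le_abs_self _
            _ = |t| * |a i w| := abs_mul t _
        have h3 : |t| * |a i w| ≤ ε * (|a i w| + 1) := by
          have := abs_nonneg (a i w)
          nlinarith [abs_nonneg t]
        linarith
  have h1 : v + ε • w ∈ Q := hmem ε (by rw [abs_of_pos hεpos])
  have h2 : v + (-ε) • w ∈ Q := hmem (-ε) (by rw [abs_neg, abs_of_pos hεpos])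
  have hseg : v ∈ openSegment ℝ (v + (-ε) • w) (v + ε • w) := by
    refine ⟨1/2, 1/2, by norm_num, by norm_num, by norm_num, ?_⟩
    module
  rw [mem_extremePoints] at hv
  obtain ⟨hA, hB⟩ := hv.2 (v + (-ε) • w) h2 (v + ε • w) h1 hseg
  have : ε • w = 0 := by
    have := congrArg (· - v) hA
    simp only [add_sub_cancel_left] at this
    have h0 : (-ε) • w = 0 := by simpa using this
    simpa [neg_smul, neg_eq_zero] using h0
  exact hw0 ((smul_eq_zero.mp this).resolve_left (ne_of_gt hεpos))

lemma key {n : ℕ} (d : ℕ) (a : Fin 5 → ((Fin n → ℝ) →ₗ[ℝ] ℝ)) (b : Fin 5 → ℝ)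
    (s : Finset (Fin 5)) (p : Fin n → ℝ) (W : Submodule ℝ (Fin n → ℝ))
    (hW : finrank ℝ W ≤ d)
    (Q : Set (Fin n → ℝ)) (hQ : Q = {x | x - p ∈ W ∧ ∀ i ∈ s, a i x ≤ b i}) :
    (Set.extremePoints ℝ Q).Finite ∧ (Set.extremePoints ℝ Q).ncard ≤ Gbd s.card d := by
  classical
  induction d generalizing a b s p W Q with
  | zero =>
    have hbot : W = ⊥ := Submodule.finrank_eq_zero.mp (le_antisymm hW (Nat.zero_le _))
    have hsub : Set.extremePoints ℝ Q ⊆ {p} := by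
      intro x hx
      have hxQ := hx.1
      rw [hQ] at hxQ
      have h0 := hxQ.1
      rw [hbot, Submodule.mem_bot] at h0
      simp [sub_eq_zero.mp h0]
    exact ⟨(Set.finite_singleton p).subset hsub,
      le_trans (Set.ncard_le_ncard hsub (Set.finite_singleton p)) (by simp [Gbd])⟩
  | succ d ih =>
    by_cases hle : finrank ℝ W ≤ d
    · obtain ⟨h1, h2⟩ := ih a b s p W hle Q hQ
      exact ⟨h1, h2.trans (Gbd_mono _ _)⟩
    have hrank : finrank ℝ W = d + 1 := le_antisymm hW (by omega)
    rcases Nat.eq_zero_or_pos d with rfl | hd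
    · have := line_case p W (by omega) Q (fun x hx => by rw [hQ] at hx; exact hx.1)
      exact ⟨this.1, this.2.trans_eq (by simp [Gbd])⟩
    obtain ⟨e, rfl⟩ : ∃ e, d = e + 1 := ⟨d - 1, by omega⟩
    have hE : True := trivial
    let E := Set.extremePoints ℝ Q
    let s' : Finset (Fin 5) := s.filter (fun i => ¬ W ≤ LinearMap.ker (a i))
    let T : (Fin n → ℝ) → Finset (Fin 5) := fun v => s'.filter (fun i => a i v = b i)
    -- Step 1 : every extreme point has at least e+2 "effective" tight constraints
    have step1 : ∀ v ∈ E, e + 2 ≤ (T v).card := by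
      intro v hv
      have hbot : W ⊓ (⨅ i ∈ T v, LinearMap.ker (a i)) = ⊥ := by
        rw [Submodule.eq_bot_iff]
        intro w hwmem
        rw [Submodule.mem_inf] at hwmem
        have hwW : w ∈ W := hwmem.1
        have hwker : ∀ i ∈ T v, a i w = 0 := by
          intro i hi
          have h2 := hwmem.2
          simp only [Submodule.mem_iInf] at h2
          exact h2 i hi
        refine tight_ker a b s p W Q hQ hv hwW (fun i hi hbi => ?_)
        by_cases hk : W ≤ LinearMap.ker (a i)
        · exact hk hwW
        · refine hwker i ?_
          show i ∈ s'.filter (fun i => a i v = b i)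
          exact Finset.mem_filter.mpr ⟨Finset.mem_filter.mpr ⟨hi, hk⟩, hbi⟩
      have hcard := finrank_le_card_add a (T v) W
      rw [hbot] at hcard
      simp only [finrank_bot, add_zero] at hcard
      omega
    -- Step 2 : faces
    have face_ext : ∀ v ∈ E, ∀ i, a i v = b i →
        v ∈ Set.extremePoints ℝ (Q ∩ {x | a i x = b i}) := by
      intro v hv i hvi
      exact inter_extremePoints_subset_extremePoints_of_subset Set.inter_subset_left
        ⟨⟨hv.1, hvi⟩, hv⟩
    have face_repr : ∀ i ∈ s', (Set.extremePoints ℝ (Q ∩ {x | a i x = b i})).Finite ∧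
        (Set.extremePoints ℝ (Q ∩ {x | a i x = b i})).ncard ≤ Gbd (s.card - 1) (e+1) := by
      intro i hi
      rw [Finset.mem_filter] at hi
      obtain ⟨his, hiker⟩ := hi
      rcases Set.eq_empty_or_nonempty (Q ∩ {x | a i x = b i}) with hF | ⟨q, hq⟩
      · rw [hF]; simp
      · have hqQ : q ∈ Q := hq.1
        have hqi : a i q = b i := hq.2
        rw [hQ] at hqQ
        have hlt : W ⊓ LinearMap.ker (a i) < W := by
          refine lt_of_le_of_ne inf_le_left (fun h => hiker ?_)
          rw [← h]; exact inf_le_right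
        have hfr : finrank ℝ ↥(W ⊓ LinearMap.ker (a i)) ≤ e + 1 := by
          have := Submodule.finrank_lt_finrank_of_lt hlt
          omega
        have hFeq : Q ∩ {x | a i x = b i} =
            {x | x - q ∈ W ⊓ LinearMap.ker (a i) ∧ ∀ j ∈ s.erase i, a j x ≤ b j} := by
          ext x
          constructor
          · rintro ⟨hxQ, hxi⟩
            rw [hQ] at hxQ
            refine ⟨Submodule.mem_inf.mpr ⟨?_, ?_⟩,
              fun j hj => hxQ.2 j (Finset.mem_of_mem_erase hj)⟩
            · have hx : x - q = (x - p) - (q - p) := by abel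
              rw [hx]; exact W.sub_mem hxQ.1 hqQ.1
            · rw [LinearMap.mem_ker, map_sub, hxi, hqi, sub_self]
          · rintro ⟨hxW, hxs⟩
            rw [Submodule.mem_inf] at hxW
            have hxi : a i x = b i := by
              have h0 : a i (x - q) = 0 := hxW.2
              rw [map_sub] at h0
              have h1 : a i x = a i q := sub_eq_zero.mp h0
              rw [h1, hqi]
            refine ⟨?_, hxi⟩
            rw [hQ]
            refine ⟨?_, fun j hj => ?_⟩
            · have hx : x - p = (x - q) + (q - p) := by abel
              rw [hx]; exact W.add_mem hxW.1 hqQ.1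
            · by_cases hji : j = i
              · rw [hji, hxi]
              · exact hxs j (Finset.mem_erase.mpr ⟨hji, hj⟩)
        have := ih a b (s.erase i) q (W ⊓ LinearMap.ker (a i)) hfr _ rfl
        rw [Finset.card_erase_of_mem his] at this
        rw [hFeq]
        exact this
    -- Step 3 : cover and finiteness
    have hcover : E ⊆ ⋃ i ∈ s', Set.extremePoints ℝ (Q ∩ {x | a i x = b i}) := by
      intro v hv
      have h1 := step1 v hv
      obtain ⟨i, hi⟩ := Finset.card_pos.mp (show 0 < (T v).card by omega)
      have hi' := Finset.mem_filter.mp (show i ∈ s'.filter (fun i => a i v = b i) from hi)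
      exact Set.mem_biUnion hi'.1 (face_ext v hv i hi'.2)
    have hEfin : E.Finite := by
      refine Set.Finite.subset (Set.Finite.biUnion s'.finite_toSet
        (fun i hi => (face_repr i hi).1)) hcover
    -- Step 4 : counting
    have hGbd : Gbd s.card (e+2)
        = max (Gbd s.card (e+1)) ((s.card * Gbd (s.card - 1) (e+1)) / (e+2)) := rfl
    have hEncard : E.ncard ≤ (s.card * Gbd (s.card - 1) (e+1)) / (e+2) := by
      rw [Nat.le_div_iff_mul_le (by omega)]
      classical
      set Ef := hEfin.toFinset with hEf
      have hEcard : E.ncard = Ef.card := Set.ncard_eq_toFinset_card E hEfin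
      have hcount : Ef.card * (e + 2) ≤ ∑ i ∈ s', (Ef.filter (fun v => a i v = b i)).card := by
        calc Ef.card * (e+2) = ∑ _v ∈ Ef, (e+2) := by rw [Finset.sum_const, smul_eq_mul, mul_comm]
          _ ≤ ∑ v ∈ Ef, (T v).card :=
              Finset.sum_le_sum (fun v hv => step1 v (hEfin.mem_toFinset.mp hv))
          _ = ∑ v ∈ Ef, ∑ i ∈ s', (if a i v = b i then 1 else 0) := by
              refine Finset.sum_congr rfl fun v _ => ?_
              exact Finset.card_filter _ _
          _ = ∑ i ∈ s', ∑ v ∈ Ef, (if a i v = b i then 1 else 0) := Finset.sum_comm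
          _ = ∑ i ∈ s', (Ef.filter (fun v => a i v = b i)).card := by
              refine Finset.sum_congr rfl fun i _ => (Finset.card_filter _ _).symm
      have hface : ∀ i ∈ s', (Ef.filter (fun v => a i v = b i)).card
          ≤ Gbd (s.card - 1) (e+1) := by
        intro i hi
        obtain ⟨hfin, hcard⟩ := face_repr i hi
        have hsubf : Ef.filter (fun v => a i v = b i) ⊆ hfin.toFinset := by
          intro v hv
          rw [Finset.mem_filter] at hv
          rw [Set.Finite.mem_toFinset]
          exact face_ext v (hEfin.mem_toFinset.mp hv.1) i hv.2
        calc (Ef.filter (fun v => a i v = b i)).card ≤ hfin.toFinset.card :=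
              Finset.card_le_card hsubf
          _ = (Set.extremePoints ℝ (Q ∩ {x | a i x = b i})).ncard :=
              (Set.ncard_eq_toFinset_card _ hfin).symm
          _ ≤ Gbd (s.card - 1) (e+1) := hcard
      calc E.ncard * (e+2) = Ef.card * (e+2) := by rw [hEcard]
        _ ≤ ∑ i ∈ s', (Ef.filter (fun v => a i v = b i)).card := hcount
        _ ≤ ∑ _i ∈ s', Gbd (s.card - 1) (e+1) := Finset.sum_le_sum hface
        _ = s'.card * Gbd (s.card - 1) (e+1) := by rw [Finset.sum_const, smul_eq_mul]
        _ ≤ s.card * Gbd (s.card - 1) (e+1) :=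
            Nat.mul_le_mul_right _ (Finset.card_filter_le _ _)
    exact ⟨hEfin, by rw [hGbd]; exact le_trans hEncard (le_max_right _ _)⟩


/-- If `Q ⊆ ℝ^n` is a polytope that is the solution set of at most 5 linear inequalities
(i.e. `Q` has at most 5 facets), then any affine image of `Q` has at most 6 vertices
(extreme points). -/
theorem stmt0 {n m : ℕ} (a : Fin 5 → ((Fin n → ℝ) →ₗ[ℝ] ℝ)) (b : Fin 5 → ℝ)
    (Q : Set (Fin n → ℝ)) (hQ : Q = {x | ∀ i : Fin 5, a i x ≤ b i})
    (hbdd : Bornology.IsBounded Q)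
    (f : (Fin n → ℝ) →ᵃ[ℝ] (Fin m → ℝ)) :
    (Set.extremePoints ℝ (f '' Q)).Finite ∧ (Set.extremePoints ℝ (f '' Q)).ncard ≤ 6 := by
  classical
  have hQclosed : IsClosed Q := by
    rw [hQ]
    have hI : {x : Fin n → ℝ | ∀ i : Fin 5, a i x ≤ b i}
        = ⋂ i, (a i) ⁻¹' (Set.Iic (b i)) := by ext x; simp
    rw [hI]
    exact isClosed_iInter fun i =>
      isClosed_Iic.preimage (a i).continuous_of_finiteDimensional
  have hext : (Set.extremePoints ℝ Q).Finite ∧ (Set.extremePoints ℝ Q).ncard ≤ 6 := by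
    have hQ' : Q = {x | x - 0 ∈ (⊤ : Submodule ℝ (Fin n → ℝ))
        ∧ ∀ i ∈ (Finset.univ : Finset (Fin 5)), a i x ≤ b i} := by
      rw [hQ]; ext x; simp
    have hk := key (finrank ℝ (Fin n → ℝ)) a b Finset.univ 0 ⊤
      (le_of_eq (finrank_top ℝ (Fin n → ℝ))) Q hQ'
    refine ⟨hk.1, le_trans hk.2 ?_⟩
    have h6 := (Gbd_le (finrank ℝ (Fin n → ℝ))).2.2.2.2.2
    have hcard : (Finset.univ : Finset (Fin 5)).card = 5 := by simp
    rw [hcard]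
    exact h6
  have himg : Set.extremePoints ℝ (f '' Q) ⊆ f '' (Set.extremePoints ℝ Q) := by
    intro y hy
    have hyQ : y ∈ f '' Q := hy.1
    obtain ⟨x0, hx0, rfl⟩ := hyQ
    set F : Set (Fin n → ℝ) := Q ∩ f ⁻¹' {f x0} with hF
    have hQcompact : IsCompact Q := Metric.isCompact_of_isClosed_isBounded hQclosed hbdd
    have hFcompact : IsCompact F := hQcompact.inter_right
      (isClosed_singleton.preimage f.continuous_of_finiteDimensional)
    have hFne : F.Nonempty := ⟨x0, hx0, rfl⟩
    obtain ⟨x, hxF⟩ := hFcompact.extremePoints_nonempty hFne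
    rw [mem_extremePoints] at hxF hy
    refine ⟨x, ?_, hxF.1.2⟩
    rw [mem_extremePoints]
    refine ⟨hxF.1.1, fun x₁ hx₁ x₂ hx₂ hseg => ?_⟩
    have hfx : f x ∈ openSegment ℝ (f x₁) (f x₂) := by
      rw [← image_openSegment]
      exact Set.mem_image_of_mem f hseg
    have hfxeq : f x = f x0 := hxF.1.2
    rw [hfxeq] at hfx
    have h12 := hy.2 (f x₁) (Set.mem_image_of_mem f hx₁) (f x₂)
      (Set.mem_image_of_mem f hx₂) hfx
    have hx₁F : x₁ ∈ F := ⟨hx₁, h12.1⟩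
    have hx₂F : x₂ ∈ F := ⟨hx₂, h12.2⟩
    exact hxF.2 x₁ hx₁F x₂ hx₂F hseg
  refine ⟨(hext.1.image f).subset himg, ?_⟩
  calc (Set.extremePoints ℝ (f '' Q)).ncard ≤ (f '' Set.extremePoints ℝ Q).ncard :=
        Set.ncard_le_ncard himg (hext.1.image f)
    _ ≤ (Set.extremePoints ℝ Q).ncard := Set.ncard_image_le hext.1
    _ ≤ 6 := hext.2
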